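/- Let m, d be positive natural numbers, T : Matrix (Fin m) (Fin d) ℝ, and K(T) = {x ∈ ℝ^m : Matrix.vecMul x T = 0 and ∑ i, x i = 0}. Suppose K(T) ≠ {0}, and let A : Matrix (Fin m) (Fin m) ℝ satisfy A i j > 0 for all i, j and ∑ j, A i j = 1 for every i. Then the set of matrices A' : Matrix (Fin m) (Fin m) ℝ with A' i j ≥ 0 for all i, j, ∑ j, A' i j = 1 for every i, and A' * T = A * T, is infinite. In particular there exists A' ≠ A with these properties, so A is non-identifiable even among row-stochastic matrices. -/

import Mathlib

/-- `KT T` is the subspace `{x ∈ ℝ^m : xᵀT = 0 ∧ ∑ i, x i = 0}`, i.e. the kernel of the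
transpose of the augmented matrix `[T,1]`, viewed as a submodule of Euclidean space. -/
noncomputable def KT {m d : ℕ} (T : Matrix (Fin m) (Fin d) ℝ) :
    Submodule ℝ (EuclideanSpace ℝ (Fin m)) where
  carrier := {x | Matrix.vecMul x T = 0 ∧ ∑ i, x i = 0}
  add_mem' := by
    rintro a b ⟨ha1, ha2⟩ ⟨hb1, hb2⟩
    refine ⟨?_, ?_⟩
    · show Matrix.vecMul (a + b) T = 0
      simp [Matrix.add_vecMul, ha1, hb1]
    · show ∑ i, (a + b) i = 0
      simp only [PiLp.add_apply, Finset.sum_add_distrib, ha2, hb2, add_zero]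
  zero_mem' := by
    refine ⟨?_, ?_⟩
    · show Matrix.vecMul (0 : Fin m → ℝ) T = 0
      simp
    · show ∑ i, (0 : EuclideanSpace ℝ (Fin m)) i = 0
      simp
  smul_mem' := by
    rintro c a ⟨ha1, ha2⟩
    refine ⟨?_, ?_⟩
    · show Matrix.vecMul (c • a) T = 0
      simp [Matrix.smul_vecMul, ha1]
    · show ∑ i, (c • a) i = 0
      simp only [PiLp.smul_apply, smul_eq_mul, ← Finset.mul_sum, ha2, mul_zero]

/-- If `K(T) ≠ {0}` then a softmax attention matrix `A` is non-identifiable even among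
row-stochastic matrices: infinitely many entrywise-nonnegative matrices with rows summing
to `1` produce the same output `A * T`; in particular some such `A' ≠ A` exists. -/
theorem stmt_14 (m d : ℕ) (hm : 0 < m) (hd : 0 < d) (T : Matrix (Fin m) (Fin d) ℝ)
    (hK : KT T ≠ ⊥) (A : Matrix (Fin m) (Fin m) ℝ)
    (hpos : ∀ i j, 0 < A i j) (hrow : ∀ i, ∑ j, A i j = 1) :
    {A' : Matrix (Fin m) (Fin m) ℝ |
        (∀ i j, 0 ≤ A' i j) ∧ (∀ i, ∑ j, A' i j = 1) ∧ A' * T = A * T}.Infinite ∧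
      ∃ A' : Matrix (Fin m) (Fin m) ℝ, A' ≠ A ∧ (∀ i j, 0 ≤ A' i j) ∧
        (∀ i, ∑ j, A' i j = 1) ∧ A' * T = A * T := by
  obtain ⟨x, hxK, hx0⟩ := (Submodule.ne_bot_iff _).mp hK
  obtain ⟨hxT, hxs⟩ := hxK
  obtain ⟨j0, hj0⟩ : ∃ j0, x j0 ≠ 0 := by
    by_contra h
    push_neg at h
    exact hx0 (PiLp.ext h)
  have : Nonempty (Fin m) := ⟨⟨0, hm⟩⟩
  set B : Matrix (Fin m) (Fin m) ℝ := Matrix.of (fun i j => x j) with hB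
  have hBT : B * T = 0 := by
    ext i k
    have := congrFun hxT k
    simpa [Matrix.mul_apply, Matrix.vecMul, dotProduct, hB] using this
  set f : ℝ → Matrix (Fin m) (Fin m) ℝ := fun lam => A + lam • B with hf
  have hfinj : Function.Injective f := by
    intro a b hab
    have := congrFun (congrFun hab ⟨0, hm⟩) j0
    simp only [hf, hB, Matrix.add_apply, Matrix.smul_apply, Matrix.of_apply,
      smul_eq_mul, add_right_inj] at this
    exact mul_right_cancel₀ hj0 this
  set ε : ℝ := Finset.inf' Finset.univ Finset.univ_nonempty
      (fun p : Fin m × Fin m => A p.1 p.2 / (|x p.2| + 1)) with hε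
  have habs : ∀ j, (0:ℝ) < |x j| + 1 := fun j => by positivity
  have hεpos : 0 < ε := by
    rw [hε]
    apply Finset.lt_inf'_iff _ |>.mpr
    intro p _
    exact div_pos (hpos p.1 p.2) (habs p.2)
  have hεle : ∀ i j, ε * (|x j| + 1) ≤ A i j := by
    intro i j
    have h1 : ε ≤ A i j / (|x j| + 1) :=
      Finset.inf'_le _ (Finset.mem_univ (i, j))
    calc ε * (|x j| + 1) ≤ (A i j / (|x j| + 1)) * (|x j| + 1) := by
          exact mul_le_mul_of_nonneg_right h1 (le_of_lt (habs j))
      _ = A i j := div_mul_cancel₀ _ (ne_of_gt (habs j))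
  have hmem : ∀ lam : ℝ, lam ∈ Set.Ioc (0:ℝ) ε →
      f lam ∈ {A' : Matrix (Fin m) (Fin m) ℝ |
        (∀ i j, 0 ≤ A' i j) ∧ (∀ i, ∑ j, A' i j = 1) ∧ A' * T = A * T} := by
    rintro lam ⟨hl0, hlε⟩
    refine ⟨?_, ?_, ?_⟩
    · intro i j
      have h1 : lam * |x j| ≤ ε * (|x j| + 1) := by
        have : |x j| ≤ |x j| + 1 := by linarith
        calc lam * |x j| ≤ ε * |x j| :=
              mul_le_mul_of_nonneg_right hlε (abs_nonneg _)
          _ ≤ ε * (|x j| + 1) := mul_le_mul_of_nonneg_left this (le_of_lt hεpos)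
      have h2 : -(lam * x j) ≤ A i j := by
        have : -(lam * x j) ≤ lam * |x j| := by
          rw [← mul_neg]
          exact mul_le_mul_of_nonneg_left (neg_le_abs _) (le_of_lt hl0)
        linarith [hεle i j]
      simp only [hf, hB, Matrix.add_apply, Matrix.smul_apply, Matrix.of_apply,
        smul_eq_mul]
      linarith
    · intro i
      simp only [hf, hB, Matrix.add_apply, Matrix.smul_apply, Matrix.of_apply,
        smul_eq_mul, Finset.sum_add_distrib, hrow i, ← Finset.mul_sum, hxs,
        mul_zero, add_zero]
    · rw [hf]
      simp only [Matrix.add_mul, Matrix.smul_mul, hBT, smul_zero, add_zero]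
  constructor
  · have himg : (f '' Set.Ioc 0 ε).Infinite :=
      Set.Infinite.image hfinj.injOn (Set.Ioc_infinite hεpos)
    refine himg.mono ?_
    rintro y ⟨lam, hl, rfl⟩
    exact hmem lam hl
  · refine ⟨f ε, ?_, hmem ε ⟨hεpos, le_refl _⟩⟩
    intro h
    have := congrFun (congrFun h ⟨0, hm⟩) j0
    simp only [hf, hB, Matrix.add_apply, Matrix.smul_apply, Matrix.of_apply,
      smul_eq_mul] at this
    have : ε * x j0 = 0 := by linarith
    rcases mul_eq_zero.mp this with h1 | h1
    · exact ne_of_gt hεpos h1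
    · exact hj0 h1
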